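/- arXiv:1004.2274 — 2 statements merged into one kernel-verified Lean document; each statement's English description precedes it below -/
import Mathlib

section
/- Let u be a C² function on the closed unit ball in ℝ² satisfying ∫_{B_1(0)} |1 − |Du|²| |D²u| dz ≤ β and ∫_{B_1(0)} |1 − |Du|²| dz ≤ β for some β ∈ (0,1). Then for every unit vector w ∈ S¹ there exists a set G_w ⊂ P_{w^⊥}(B_1(0)) with |P_{w^⊥}(B_1(0)) \ G_w| ≤ c β^{1/3} (one-dimensional Lebesgue measure, c an absolute constant) such that for every x ∈ G_w: sup{ ||Du(z)| − 1| : z ∈ P_{w^⊥}^{-1}(x) ∩ B_1(0) } ≤ 5 β^{1/3}. -/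
open MeasureTheory Metric Set Filter
open scoped Real NNReal ENNReal Topology BigOperators

noncomputable section

abbrev E2 : Type := EuclideanSpace ℝ (Fin 2)

def e2 (i : Fin 2) : E2 := EuclideanSpace.single i 1

/-- `i`-th partial derivative of `u`, computed within the closed unit ball. -/
def pdB (u : E2 → ℝ) (i : Fin 2) (z : E2) : ℝ :=
  fderivWithin ℝ u (closedBall (0 : E2) 1) z (e2 i)

/-- Second partial derivative `∂_i ∂_j` of `u`, computed within the closed unit ball. -/
def pd2B (u : E2 → ℝ) (i j : Fin 2) (z : E2) : ℝ :=
  fderivWithin ℝ (fun y => pdB u j y) (closedBall (0 : E2) 1) z (e2 i)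

/-- `|Du(z)|²`. -/
def gradSq (u : E2 → ℝ) (z : E2) : ℝ := ∑ i, (pdB u i z) ^ 2

/-- `|D²u(z)|`, the Euclidean norm of the Hessian matrix. -/
def hessNorm (u : E2 → ℝ) (z : E2) : ℝ :=
  Real.sqrt (∑ i, ∑ j, (pd2B u i j z) ^ 2)

/-- The gradient of `u` (within the closed unit ball) as a vector in `ℝ²`. -/
def gradVec (u : E2 → ℝ) (z : E2) : E2 :=
  (EuclideanSpace.equiv (Fin 2) ℝ).symm (fun i => pdB u i z)

/-- The vector `w` rotated by `π/2` (a unit vector spanning `w^⊥`). -/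
def perp (w : E2) : E2 := (EuclideanSpace.equiv (Fin 2) ℝ).symm ![-(w 1), w 0]

namespace GoodLinesAux

lemma uniqueDiffOn_K : UniqueDiffOn ℝ (closedBall (0:E2) 1) :=
  uniqueDiffOn_convex (convex_closedBall _ _)
    (by rw [interior_closedBall (0:E2) (one_ne_zero)]; exact ⟨0, mem_ball_self one_pos⟩)

lemma sum_coord_smul (x : E2) : x = ∑ j, x j • e2 j := by
  ext i
  have h : (∑ j, x j • e2 j) i = ∑ j, x j * (e2 j) i := by
    rw [WithLp.ofLp_sum, Finset.sum_apply]; simp [PiLp.smul_apply, smul_eq_mul]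
  rw [h]
  simp [e2, EuclideanSpace.single_apply]

variable {u : E2 → ℝ}

lemma contDiffOn_pdB (hu : ContDiffOn ℝ 2 u (closedBall (0:E2) 1)) (i : Fin 2) :
    ContDiffOn ℝ 1 (pdB u i) (closedBall (0:E2) 1) := by
  have h := hu.fderivWithin (m := 1) uniqueDiffOn_K (by norm_num)
  exact h.clm_apply contDiffOn_const

lemma contOn_pdB (hu : ContDiffOn ℝ 2 u (closedBall (0:E2) 1)) (i : Fin 2) :
    ContinuousOn (pdB u i) (closedBall (0:E2) 1) :=
  (contDiffOn_pdB hu i).continuousOn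

lemma contOn_dd (hu : ContDiffOn ℝ 2 u (closedBall (0:E2) 1)) (i : Fin 2) :
    ContinuousOn (fderivWithin ℝ (pdB u i) (closedBall (0:E2) 1)) (closedBall (0:E2) 1) :=
  (contDiffOn_pdB hu i).continuousOn_fderivWithin uniqueDiffOn_K le_rfl

lemma contOn_pd2B (hu : ContDiffOn ℝ 2 u (closedBall (0:E2) 1)) (i j : Fin 2) :
    ContinuousOn (pd2B u i j) (closedBall (0:E2) 1) := by
  exact ((ContinuousLinearMap.apply ℝ ℝ (e2 i)).continuous).comp_continuousOn (contOn_dd hu j)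

lemma contOn_gradSq (hu : ContDiffOn ℝ 2 u (closedBall (0:E2) 1)) :
    ContinuousOn (gradSq u) (closedBall (0:E2) 1) := by
  exact continuousOn_finset_sum _ fun i _ => (contOn_pdB hu i).pow 2

lemma contOn_hessNorm (hu : ContDiffOn ℝ 2 u (closedBall (0:E2) 1)) :
    ContinuousOn (hessNorm u) (closedBall (0:E2) 1) := by
  apply Real.continuous_sqrt.comp_continuousOn
  exact continuousOn_finset_sum _ fun i _ =>
    continuousOn_finset_sum _ fun j _ => (contOn_pd2B hu i j).pow 2

/-- Derivative of `1 - |Du|²` in direction `w`. -/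
def D2 (u : E2 → ℝ) (w : E2) (z : E2) : ℝ :=
  -(∑ i, 2 * pdB u i z * ∑ j, w j * pd2B u j i z)

lemma contOn_D2 (hu : ContDiffOn ℝ 2 u (closedBall (0:E2) 1)) (w : E2) :
    ContinuousOn (D2 u w) (closedBall (0:E2) 1) := by
  apply ContinuousOn.neg
  refine continuousOn_finset_sum _ fun i _ => ContinuousOn.mul ?_ ?_
  · exact (continuousOn_const.mul (contOn_pdB hu i))
  · exact continuousOn_finset_sum _ fun j _ => continuousOn_const.mul (contOn_pd2B hu j i)

lemma hasDerivAt_line (hu : ContDiffOn ℝ 2 u (closedBall (0:E2) 1)) (c w : E2) (s : ℝ)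
    (hz : c + s • w ∈ ball (0:E2) 1) :
    HasDerivAt (fun r : ℝ => 1 - gradSq u (c + r • w)) (D2 u w (c + s • w)) s := by
  set K := closedBall (0:E2) 1 with hKdef
  set z := c + s • w with hzdef
  have hKn : K ∈ 𝓝 z := mem_nhds_iff.mpr ⟨ball 0 1, ball_subset_closedBall, isOpen_ball, hz⟩
  have hdi : ∀ i, HasFDerivAt (pdB u i) (fderivWithin ℝ (pdB u i) K z) z := by
    intro i
    have h1 := ((contDiffOn_pdB hu i).differentiableOn one_ne_zero) z (ball_subset_closedBall hz)
    exact h1.hasFDerivWithinAt.hasFDerivAt hKn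
  have hg : HasFDerivAt (fun y => 1 - gradSq u y)
      (-(∑ i, (2 * pdB u i z) • fderivWithin ℝ (pdB u i) K z)) z := by
    have hsum : HasFDerivAt (fun y => gradSq u y)
        (∑ i, (2 * pdB u i z) • fderivWithin ℝ (pdB u i) K z) z := by
      have h2 : ∀ i ∈ Finset.univ, HasFDerivAt (fun y => (pdB u i y)^2)
          ((2 * pdB u i z) • fderivWithin ℝ (pdB u i) K z) z := by
        intro i _
        have hm := (hdi i).fun_mul (hdi i)
        have hsq : HasFDerivAt (fun y => (pdB u i y)^2)
            (pdB u i z • fderivWithin ℝ (pdB u i) K z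
              + pdB u i z • fderivWithin ℝ (pdB u i) K z) z := by
          simpa [pow_two] using hm
        convert hsq using 1
        rw [two_mul, add_smul]
      have := HasFDerivAt.fun_sum h2
      simpa [gradSq] using this
    simpa using hsum.const_sub 1
  have hline : HasDerivAt (fun r : ℝ => c + r • w) w s := by
    simpa using ((hasDerivAt_id s).smul_const w).const_add c
  have hcomp := hg.comp_hasDerivAt s hline
  refine hcomp.congr_deriv ?_
  have happ : ∀ i, (fderivWithin ℝ (pdB u i) K z) w = ∑ j, w j * pd2B u j i z := by
    intro i
    conv_lhs => rw [sum_coord_smul w]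
    rw [map_sum]
    refine Finset.sum_congr rfl fun j _ => ?_
    rw [ContinuousLinearMap.map_smul, smul_eq_mul]
    rfl
  simp only [D2, ContinuousLinearMap.neg_apply, ContinuousLinearMap.sum_apply,
    ContinuousLinearMap.smul_apply, smul_eq_mul]
  rw [neg_inj]
  exact Finset.sum_congr rfl fun i _ => by rw [happ i]

lemma cs2 (x y p q : ℝ) (h : x^2 + y^2 = 1) : (x*p + y*q)^2 ≤ p^2 + q^2 := by
  nlinarith [sq_nonneg (x*q - y*p), sq_nonneg p, sq_nonneg q]

lemma alg_bound (a0 a1 w0 w1 p00 p01 p10 p11 : ℝ) (hw : w0^2 + w1^2 = 1) :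
    |(-(2 * a0 * (w0 * p00 + w1 * p10) + 2 * a1 * (w0 * p01 + w1 * p11)))| ≤
      2 * Real.sqrt (a0^2 + a1^2) * Real.sqrt ((p00^2 + p01^2) + (p10^2 + p11^2)) := by
  have h1 : (w0 * p00 + w1 * p10)^2 ≤ p00^2 + p10^2 := cs2 _ _ _ _ hw
  have h2 : (w0 * p01 + w1 * p11)^2 ≤ p01^2 + p11^2 := cs2 _ _ _ _ hw
  have h3 : (a0*(w0 * p00 + w1 * p10) + a1*(w0 * p01 + w1 * p11))^2 ≤
      (a0^2+a1^2) * ((w0 * p00 + w1 * p10)^2 + (w0 * p01 + w1 * p11)^2) := by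
    nlinarith [sq_nonneg (a0*(w0 * p01 + w1 * p11) - a1*(w0 * p00 + w1 * p10))]
  have key : (-(2 * a0 * (w0 * p00 + w1 * p10) + 2 * a1 * (w0 * p01 + w1 * p11)))^2 ≤
      (2 * Real.sqrt (a0^2 + a1^2) * Real.sqrt ((p00^2 + p01^2) + (p10^2 + p11^2)))^2 := by
    have hs1 : Real.sqrt (a0^2+a1^2) ^ 2 = a0^2+a1^2 := Real.sq_sqrt (by positivity)
    have hs2 : Real.sqrt ((p00^2 + p01^2) + (p10^2 + p11^2)) ^ 2
        = (p00^2 + p01^2) + (p10^2 + p11^2) := Real.sq_sqrt (by positivity)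
    have expand : (2 * Real.sqrt (a0^2 + a1^2) * Real.sqrt ((p00^2+p01^2)+(p10^2+p11^2)))^2
        = 4 * (a0^2+a1^2) * ((p00^2 + p01^2) + (p10^2 + p11^2)) := by
      rw [mul_pow, mul_pow, hs1, hs2]; ring
    rw [expand]
    nlinarith [sq_nonneg a0, sq_nonneg a1, sq_nonneg (a0^2+a1^2)]
  have h2ST : 0 ≤ 2 * Real.sqrt (a0^2 + a1^2) * Real.sqrt ((p00^2 + p01^2) + (p10^2 + p11^2)) := by
    positivity
  calc |(-(2 * a0 * (w0 * p00 + w1 * p10) + 2 * a1 * (w0 * p01 + w1 * p11)))|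
      = Real.sqrt ((-(2 * a0 * (w0 * p00 + w1 * p10) + 2 * a1 * (w0 * p01 + w1 * p11)))^2) :=
        (Real.sqrt_sq_eq_abs _).symm
    _ ≤ Real.sqrt ((2 * Real.sqrt (a0^2 + a1^2) * Real.sqrt ((p00^2+p01^2)+(p10^2+p11^2)))^2) :=
        Real.sqrt_le_sqrt key
    _ = _ := Real.sqrt_sq h2ST

lemma D2_bound (u : E2 → ℝ) (w z : E2) (hw2 : w 0^2 + w 1^2 = 1) :
    |D2 u w z| ≤ 2 * Real.sqrt (gradSq u z) * hessNorm u z := by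
  have h := alg_bound (pdB u 0 z) (pdB u 1 z) (w 0) (w 1)
    (pd2B u 0 0 z) (pd2B u 0 1 z) (pd2B u 1 0 z) (pd2B u 1 1 z) hw2
  simp only [D2, gradSq, hessNorm, Fin.sum_univ_two]
  exact h

lemma two_sqrt_bound {ε f : ℝ} (hε : 0 < ε) (hε1 : ε ≤ 1) (hf : 4*ε ≤ f) :
    2 * Real.sqrt (1 + f) ≤ 9/(4*ε) * f := by
  have hf0 : 0 ≤ f := le_trans (by positivity) hf
  have h2 : 16*ε^2 ≤ f^2 := by nlinarith
  have h3 : 4*ε*f ≤ f^2 := by nlinarith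
  have h4 : ε^2*f ≤ ε*f := by nlinarith [mul_nonneg (mul_nonneg hε.le hf0) (sub_nonneg.mpr hε1)]
  have h5 : ε*f ≤ f^2/4 := by nlinarith
  have h1 : Real.sqrt (1+f) ≤ 9/(8*ε) * f := by
    rw [show (9/(8*ε) * f) = Real.sqrt ((9/(8*ε)*f)^2) from (Real.sqrt_sq (by positivity)).symm]
    apply Real.sqrt_le_sqrt
    have hexp : (9/(8*ε)*f)^2 = 81*f^2/(64*ε^2) := by field_simp; ring
    rw [hexp, le_div_iff₀ (by positivity)]
    nlinarith
  calc 2 * Real.sqrt (1+f) ≤ 2 * (9/(8*ε) * f) := by linarith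
    _ = 9/(4*ε) * f := by field_simp; ring

lemma abs_sqrt_sub_one_le {q : ℝ} (hq : 0 ≤ q) : |Real.sqrt q - 1| ≤ |1 - q| := by
  have h1 : Real.sqrt q ^ 2 = q := Real.sq_sqrt hq
  have h2 : 0 ≤ Real.sqrt q := Real.sqrt_nonneg q
  have hfac : 1 - q = (1 - Real.sqrt q) * (1 + Real.sqrt q) := by nlinarith
  rw [hfac, abs_mul, abs_of_nonneg (by linarith : (0:ℝ) ≤ 1 + Real.sqrt q),
    abs_sub_comm (Real.sqrt q) 1]
  exact le_mul_of_one_le_right (abs_nonneg _) (by linarith)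

lemma crossing {ε C : ℝ} (hC : 0 < C) {a b : ℝ} (hab : a ≤ b)
    {φ ρ M : ℝ → ℝ}
    (hφ : ∀ s ∈ Icc a b, HasDerivAt φ (ρ s) s)
    (hρ : ContinuousOn ρ (Icc a b)) (hM : ContinuousOn M (Icc a b))
    (hM0 : ∀ s ∈ Icc a b, 0 ≤ M s)
    (hbound : ∀ s ∈ Icc a b, 4*ε ≤ |φ s| → |ρ s| ≤ C * M s)
    (ha4 : |φ a| ≤ 4*ε) (hb5' : 5*ε ≤ |φ b|) :
    ε / C ≤ ∫ s in a..b, M s := by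
  have hφc : ContinuousOn φ (Icc a b) := fun s hs =>
    (hφ s hs).continuousAt.continuousWithinAt
  set S : Set ℝ := Icc a b ∩ (fun s => |φ s|) ⁻¹' Iic (4*ε) with hS
  have hSc : IsClosed S :=
    (hφc.abs).preimage_isClosed_of_isClosed isClosed_Icc isClosed_Iic
  have haS : a ∈ S := ⟨⟨le_refl a, hab⟩, ha4⟩
  have hSbdd : BddAbove S := (bddAbove_Icc).mono (inter_subset_left)
  set s1 := sSup S with hs1
  have hs1S : s1 ∈ S := hSc.csSup_mem ⟨a, haS⟩ hSbdd
  have has1 : a ≤ s1 := le_csSup hSbdd haS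
  have hs1b : s1 ≤ b := csSup_le ⟨a, haS⟩ fun x hx => hx.1.2
  have hIcc_sub : Icc s1 b ⊆ Icc a b := Icc_subset_Icc has1 le_rfl
  have hIoc : ∀ s ∈ Ioc s1 b, 4*ε < |φ s| := by
    intro s hs
    by_contra hcon
    push_neg at hcon
    have hsS : s ∈ S := ⟨⟨has1.trans hs.1.le, hs.2⟩, hcon⟩
    exact absurd (le_csSup hSbdd hsS) (not_le.mpr hs.1)
  have hderiv : ∀ s ∈ uIcc s1 b, HasDerivAt φ (ρ s) s := by
    intro s hs
    rw [uIcc_of_le hs1b] at hs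
    exact hφ s (hIcc_sub hs)
  have hρint : IntervalIntegrable ρ volume s1 b := by
    apply ContinuousOn.intervalIntegrable
    rw [uIcc_of_le hs1b]
    exact hρ.mono hIcc_sub
  have hftc : ∫ s in s1..b, ρ s = φ b - φ s1 :=
    intervalIntegral.integral_eq_sub_of_hasDerivAt hderiv hρint
  have hMint : ∀ a' b', a ≤ a' → a' ≤ b' → b' ≤ b → IntervalIntegrable M volume a' b' := by
    intro a' b' h1 h2 h3
    apply ContinuousOn.intervalIntegrable
    rw [uIcc_of_le h2]
    exact hM.mono (Icc_subset_Icc h1 h3)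
  have hCMint : IntervalIntegrable (fun s => C * M s) volume s1 b :=
    (hMint s1 b has1 hs1b le_rfl).const_mul C
  have hbnd : ∀ᵐ t ∂(volume.restrict (Set.uIoc s1 b)), ‖ρ t‖ ≤ C * M t := by
    filter_upwards [ae_restrict_mem measurableSet_uIoc] with t ht
    rw [uIoc_of_le hs1b] at ht
    exact hbound t (hIcc_sub (Ioc_subset_Icc_self ht)) (hIoc t ht).le
  have hkey : ε ≤ ∫ s in s1..b, C * M s := by
    have h1 : ε ≤ |φ b| - |φ s1| := by
      have h0 : |φ s1| ≤ 4*ε := hs1S.2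
      linarith
    have h2 : |φ b| - |φ s1| ≤ |φ b - φ s1| := abs_sub_abs_le_abs_sub _ _
    have h3 : |φ b - φ s1| = ‖∫ s in s1..b, ρ s‖ := by rw [hftc]; rfl
    have h4 := intervalIntegral.norm_integral_le_abs_of_norm_le hbnd hCMint
    have h5 : |∫ s in s1..b, C * M s| = ∫ s in s1..b, C * M s := by
      apply abs_of_nonneg
      apply intervalIntegral.integral_nonneg hs1b
      intro s hs
      exact mul_nonneg hC.le (hM0 s (hIcc_sub hs))
    rw [h5] at h4
    linarith
  have hconst : ∫ s in s1..b, C * M s = C * ∫ s in s1..b, M s :=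
    intervalIntegral.integral_const_mul C M
  have hM1 : ε / C ≤ ∫ s in s1..b, M s := by
    rw [hconst] at hkey
    rw [div_le_iff₀ hC] at *
    nlinarith
  have hsplit : (∫ s in a..s1, M s) + (∫ s in s1..b, M s) = ∫ s in a..b, M s :=
    intervalIntegral.integral_add_adjacent_intervals (hMint a s1 le_rfl has1 hs1b)
      (hMint s1 b has1 hs1b le_rfl)
  have hfirst : 0 ≤ ∫ s in a..s1, M s := by
    apply intervalIntegral.integral_nonneg has1
    intro s hs
    exact hM0 s ⟨hs.1, hs.2.trans hs1b⟩
  linarith [hM1, hfirst, hsplit]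

lemma measurable_indicator_ball {f : E2 → ℝ} (hf : ContinuousOn f (ball (0:E2) 1)) :
    Measurable ((ball (0:E2) 1).indicator fun z => ENNReal.ofReal (f z)) := by
  have hemb : MeasurableEmbedding ((↑) : (ball (0:E2) 1) → E2) :=
    MeasurableEmbedding.subtype_coe measurableSet_ball
  have hfm : Measurable fun x : ball (0:E2) 1 => ENNReal.ofReal (f x) :=
    hf.restrict.measurable.ennreal_ofReal
  have h := hemb.measurable_extend hfm (measurable_const (a := (0:ℝ≥0∞)))
  convert h using 1
  funext z
  by_cases hz : z ∈ ball (0:E2) 1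
  · rw [indicator_of_mem hz]
    have hz' : z = ((⟨z, hz⟩ : ball (0:E2) 1) : E2) := rfl
    rw [hz', Subtype.coe_injective.extend_apply]
  · rw [indicator_of_notMem hz, Function.extend_apply']
    rintro ⟨x, hx⟩
    exact hz (hx ▸ x.2)

lemma norm_sq_E2 (x : E2) : ‖x‖^2 = x 0^2 + x 1^2 := by
  rw [EuclideanSpace.norm_eq, Real.sq_sqrt (by positivity)]
  simp [Fin.sum_univ_two, sq_abs]

lemma exists_measure_equiv (v w : E2) (hv2 : v 0^2 + v 1^2 = 1) (hw2 : w 0^2 + w 1^2 = 1)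
    (hvw : v 0 * w 0 + v 1 * w 1 = 0) :
    ∃ Φe : (ℝ × ℝ) ≃ᵐ E2, MeasurePreserving Φe volume volume ∧
      ⇑Φe = fun p : ℝ × ℝ => p.1 • v + p.2 • w := by
  have hon : Orthonormal ℝ (![v, w] : Fin 2 → E2) := by
    rw [orthonormal_iff_ite]
    intro i j
    fin_cases i <;> fin_cases j <;>
      simp [-inner_self_eq_norm_sq_to_K, PiLp.inner_apply, RCLike.inner_apply, Fin.sum_univ_two] <;>
      linarith [hv2, hw2, hvw]
  have hcard : Fintype.card (Fin 2) = Module.finrank ℝ E2 := by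
    simp [finrank_euclideanSpace_fin]
  set bas := basisOfOrthonormalOfCardEqFinrank hon hcard with hbas
  have hbascoe : ⇑bas = ![v, w] := coe_basisOfOrthonormalOfCardEqFinrank hon hcard
  set b := bas.toOrthonormalBasis (by rw [hbascoe]; exact hon) with hb
  have hbcoe : ⇑b = ![v, w] := by
    rw [hb, Module.Basis.coe_toOrthonormalBasis, hbascoe]
  refine ⟨(MeasurableEquiv.finTwoArrow.symm.trans
    ((MeasurableEquiv.toLp 2 (Fin 2 → ℝ)).symm.symm.trans b.measurableEquiv.symm)), ?_, ?_⟩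
  · have h1 : MeasurePreserving (MeasurableEquiv.finTwoArrow (α := ℝ)).symm volume volume :=
      (volume_preserving_finTwoArrow ℝ).symm
    have h2 : MeasurePreserving (MeasurableEquiv.toLp 2 (Fin 2 → ℝ)).symm.symm volume volume :=
      (EuclideanSpace.volume_preserving_symm_measurableEquiv_toLp (Fin 2)).symm
    have h3 : MeasurePreserving b.measurableEquiv.symm volume volume :=
      b.measurePreserving_measurableEquiv.symm
    exact (h3.comp (h2.comp h1))
  · funext p
    show b.repr.symm ((WithLp.equiv 2 _).symm (MeasurableEquiv.finTwoArrow.symm p)) = _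
    have hfin : (MeasurableEquiv.finTwoArrow.symm p : Fin 2 → ℝ) = ![p.1, p.2] := rfl
    rw [hfin, ← b.sum_repr_symm]
    simp [Fin.sum_univ_two, hbcoe]

end GoodLinesAux
open GoodLinesAux in
set_option maxHeartbeats 2000000 in
/-- Let `u` be `C²` on the closed unit ball with
`∫_{B_1(0)} |1 − |Du|²||D²u| ≤ β` and `∫_{B_1(0)} |1 − |Du|²| ≤ β`, `β ∈ (0,1)`.
Then for every unit vector `w` there is a set `G_w` of parameters of lines parallel
to `w` (`P_{w^⊥}(B_1(0))` is identified with `(-1,1)` via the coordinate `z ↦ ⟪z, w^⊥⟫`)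
whose complement has measure at most `c β^{1/3}`, such that on every line with
parameter in `G_w`, `||Du| − 1| ≤ 5 β^{1/3}` throughout `B_1(0)`. -/
theorem good_lines_lemma :
    ∃ c > (0 : ℝ), ∀ u : E2 → ℝ, ContDiffOn ℝ 2 u (closedBall (0 : E2) 1) →
      ∀ β ∈ Set.Ioo (0 : ℝ) 1,
        (∫ z in ball (0 : E2) 1, |1 - gradSq u z| * hessNorm u z) ≤ β →
        (∫ z in ball (0 : E2) 1, |1 - gradSq u z|) ≤ β →
        ∀ w : E2, ‖w‖ = 1 →
          ∃ G : Set ℝ, G ⊆ Set.Ioo (-1 : ℝ) 1 ∧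
            volume (Set.Ioo (-1 : ℝ) 1 \ G) ≤ ENNReal.ofReal (c * β ^ ((1 : ℝ) / 3)) ∧
            ∀ t ∈ G, ∀ z ∈ ball (0 : E2) 1, (∑ i, z i * perp w i) = t →
              |Real.sqrt (gradSq u z) - 1| ≤ 5 * β ^ ((1 : ℝ) / 3) := by
  refine ⟨5, by norm_num, ?_⟩
  intro u hu β hβ hint1 hint2 w hw
  have hβ0 : 0 < β := hβ.1
  have hβ1 : β < 1 := hβ.2
  set ε := β ^ ((1:ℝ)/3) with hε
  have hε0 : 0 < ε := Real.rpow_pos_of_pos hβ0 _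
  have hε1 : ε < 1 := Real.rpow_lt_one hβ0.le hβ1 (by norm_num)
  have hε3 : ε ^ (3:ℕ) = β := by
    rw [hε, ← Real.rpow_natCast (β ^ ((1:ℝ)/3)) 3, ← Real.rpow_mul hβ0.le]
    norm_num
  set v := perp w with hv
  have hv0 : v 0 = -(w 1) := rfl
  have hv1 : v 1 = w 0 := rfl
  have hw2 : w 0 ^ 2 + w 1 ^ 2 = 1 := by
    have h := norm_sq_E2 w
    rw [hw] at h
    linarith [h]
  have hv2 : v 0 ^ 2 + v 1 ^ 2 = 1 := by rw [hv0, hv1]; linarith [hw2]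
  have hvw : v 0 * w 0 + v 1 * w 1 = 0 := by rw [hv0, hv1]; ring
  -- the rotation
  obtain ⟨Φe, hΦmp, hΦeq⟩ := exists_measure_equiv v w hv2 hw2 hvw
  set Φ : ℝ × ℝ → E2 := fun p => p.1 • v + p.2 • w with hΦ
  have hΦapp : ∀ (p : ℝ × ℝ) (i : Fin 2), Φ p i = p.1 * v i + p.2 * w i := by
    intro p i
    simp [hΦ, PiLp.add_apply, PiLp.smul_apply, smul_eq_mul]
  have hΦnorm : ∀ p : ℝ × ℝ, ‖Φ p‖^2 = p.1^2 + p.2^2 := by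
    intro p
    rw [norm_sq_E2, hΦapp p 0, hΦapp p 1]
    linear_combination p.1^2 * hv2 + 2*p.1*p.2*hvw + p.2^2*hw2
  have hΦball : ∀ p : ℝ × ℝ, (Φ p ∈ ball (0:E2) 1 ↔ p.1^2 + p.2^2 < 1) := by
    intro p
    rw [mem_ball_zero_iff]
    constructor
    · intro h; nlinarith [norm_nonneg (Φ p), hΦnorm p]
    · intro h; nlinarith [norm_nonneg (Φ p), hΦnorm p]
  have hΦsurj : ∀ z : E2, z = Φ (∑ i, z i * v i, ∑ i, z i * w i) := by
    intro z
    ext i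
    rw [hΦapp]
    simp only [Fin.sum_univ_two]
    fin_cases i
    · show z 0 = (z 0 * v 0 + z 1 * v 1) * v 0 + (z 0 * w 0 + z 1 * w 1) * w 0
      rw [hv0, hv1]
      linear_combination (-(z 0)) * hw2
    · show z 1 = (z 0 * v 0 + z 1 * v 1) * v 1 + (z 0 * w 0 + z 1 * w 1) * w 1
      rw [hv0, hv1]
      linear_combination (-(z 1)) * hw2
  have hΦmeas : Measurable Φ := by rw [← hΦeq]; exact Φe.measurable
  have hΦmp' : MeasurePreserving Φ volume volume := by rw [← hΦeq]; exact hΦmp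
  have hΦemb : MeasurableEmbedding Φ := by rw [← hΦeq]; exact Φe.measurableEmbedding
  -- integrands
  set f : E2 → ℝ := fun z => |1 - gradSq u z| with hf
  set fh : E2 → ℝ := fun z => |1 - gradSq u z| * hessNorm u z with hfh
  have hfc : ContinuousOn f (closedBall (0:E2) 1) := (continuousOn_const.sub (contOn_gradSq hu)).abs
  have hfhc : ContinuousOn fh (closedBall (0:E2) 1) := hfc.mul (contOn_hessNorm hu)
  set F : E2 → ℝ≥0∞ := (ball (0:E2) 1).indicator (fun z => ENNReal.ofReal (f z)) with hF
  set Fh : E2 → ℝ≥0∞ := (ball (0:E2) 1).indicator (fun z => ENNReal.ofReal (fh z)) with hFh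
  have hFm : Measurable F := measurable_indicator_ball (hfc.mono ball_subset_closedBall)
  have hFhm : Measurable Fh := measurable_indicator_ball (hfhc.mono ball_subset_closedBall)
  -- line integrals
  set If : ℝ → ℝ≥0∞ := fun t => ∫⁻ s, F (Φ (t, s)) with hIf
  set Ifh : ℝ → ℝ≥0∞ := fun t => ∫⁻ s, Fh (Φ (t, s)) with hIfh
  have fubini : ∀ Fg : E2 → ℝ≥0∞, Measurable Fg →
      (∫⁻ t, ∫⁻ s, Fg (Φ (t, s))) = ∫⁻ z, Fg z := by
    intro Fg hFg
    rw [← hΦmp'.lintegral_comp_emb hΦemb Fg]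
    have hvol : (volume : Measure (ℝ × ℝ)) = (volume : Measure ℝ).prod volume :=
      MeasureTheory.Measure.volume_eq_prod ℝ ℝ
    rw [hvol]
    exact (lintegral_prod _ ((hFg.comp hΦmeas)).aemeasurable).symm
  have hIfmeas : Measurable If := (hFm.comp hΦmeas).lintegral_prod_right'
  have hIfhmeas : Measurable Ifh := (hFhm.comp hΦmeas).lintegral_prod_right'
  -- total mass bounds
  have hfint : IntegrableOn f (ball (0:E2) 1) :=
    (hfc.integrableOn_compact (isCompact_closedBall _ _)).mono_set ball_subset_closedBall
  have hfhint : IntegrableOn fh (ball (0:E2) 1) :=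
    (hfhc.integrableOn_compact (isCompact_closedBall _ _)).mono_set ball_subset_closedBall
  have htotF : (∫⁻ t, If t) ≤ ENNReal.ofReal β := by
    rw [hIf]
    rw [fubini F hFm, hF, lintegral_indicator measurableSet_ball,
      ← ofReal_integral_eq_lintegral_ofReal hfint (ae_of_all _ fun z => abs_nonneg _)]
    exact ENNReal.ofReal_le_ofReal hint2
  have htotFh : (∫⁻ t, Ifh t) ≤ ENNReal.ofReal β := by
    rw [hIfh]
    rw [fubini Fh hFhm, hFh, lintegral_indicator measurableSet_ball,
      ← ofReal_integral_eq_lintegral_ofReal hfhint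
        (ae_of_all _ fun z => mul_nonneg (abs_nonneg _) (Real.sqrt_nonneg _))]
    exact ENNReal.ofReal_le_ofReal hint1
  -- Chebyshev
  have cheb : ∀ (I : ℝ → ℝ≥0∞), Measurable I → (∫⁻ t, I t) ≤ ENNReal.ofReal β →
      ∀ L : ℝ, 0 < L → volume {t : ℝ | ENNReal.ofReal L ≤ I t} ≤ ENNReal.ofReal (β / L) := by
    intro I hI hle L hL
    calc volume {t : ℝ | ENNReal.ofReal L ≤ I t}
        ≤ (∫⁻ t, I t) / ENNReal.ofReal L :=
          meas_ge_le_lintegral_div hI.aemeasurable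
            (ne_of_gt (ENNReal.ofReal_pos.mpr hL)) ENNReal.ofReal_ne_top
      _ ≤ ENNReal.ofReal β / ENNReal.ofReal L := by gcongr
      _ = ENNReal.ofReal (β / L) := (ENNReal.ofReal_div_of_pos hL).symm
  -- the good set
  set G : Set ℝ := {t | t ∈ Set.Ioo (-1:ℝ) 1 ∧ |t| ≤ 1 - ε^2 ∧
      If t < ENNReal.ofReal (8*ε^2) ∧ Ifh t < ENNReal.ofReal (2/5*ε^2)} with hG
  refine ⟨G, fun t ht => ht.1, ?_, ?_⟩
  · -- measure bound
    have hsub : Set.Ioo (-1:ℝ) 1 \ G ⊆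
        (Set.Ioo (-1:ℝ) (-(1-ε^2)) ∪ Set.Ioo (1-ε^2) 1) ∪
        ({t : ℝ | ENNReal.ofReal (8*ε^2) ≤ If t} ∪
          {t : ℝ | ENNReal.ofReal (2/5*ε^2) ≤ Ifh t}) := by
      rintro t ⟨htI, htG⟩
      by_cases h1 : |t| ≤ 1 - ε^2
      · by_cases h2 : If t < ENNReal.ofReal (8*ε^2)
        · by_cases h3 : Ifh t < ENNReal.ofReal (2/5*ε^2)
          · exact absurd ⟨htI, h1, h2, h3⟩ htG
          · exact Or.inr (Or.inr (not_lt.mp h3))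
        · exact Or.inr (Or.inl (not_lt.mp h2))
      · left
        push_neg at h1
        rcases le_or_gt 0 t with h0 | h0
        · right
          rw [abs_of_nonneg h0] at h1
          exact ⟨h1, htI.2⟩
        · left
          rw [abs_of_neg h0] at h1
          exact ⟨htI.1, by linarith⟩
    have hεsq : ε^2 ≤ ε := by nlinarith
    have hbd1 : volume (Set.Ioo (-1:ℝ) (-(1-ε^2))) = ENNReal.ofReal (ε^2) := by
      rw [Real.volume_Ioo]; norm_num
    have hbd2 : volume (Set.Ioo (1-ε^2) (1:ℝ)) = ENNReal.ofReal (ε^2) := by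
      rw [Real.volume_Ioo]; norm_num
    have hbd3 : volume {t : ℝ | ENNReal.ofReal (8*ε^2) ≤ If t} ≤ ENNReal.ofReal (ε/8) := by
      have h := cheb If hIfmeas htotF (8*ε^2) (by positivity)
      have heq : β / (8*ε^2) = ε/8 := by
        rw [← hε3]; field_simp
      rwa [heq] at h
    have hbd4 : volume {t : ℝ | ENNReal.ofReal (2/5*ε^2) ≤ Ifh t}
        ≤ ENNReal.ofReal (5/2*ε) := by
      have h := cheb Ifh hIfhmeas htotFh (2/5*ε^2) (by positivity)
      have heq : β / (2/5*ε^2) = 5/2*ε := by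
        rw [← hε3]; field_simp
      rwa [heq] at h
    calc volume (Set.Ioo (-1:ℝ) 1 \ G)
        ≤ volume ((Set.Ioo (-1:ℝ) (-(1-ε^2)) ∪ Set.Ioo (1-ε^2) 1) ∪
          ({t : ℝ | ENNReal.ofReal (8*ε^2) ≤ If t} ∪
            {t : ℝ | ENNReal.ofReal (2/5*ε^2) ≤ Ifh t})) := measure_mono hsub
      _ ≤ (volume (Set.Ioo (-1:ℝ) (-(1-ε^2))) + volume (Set.Ioo (1-ε^2) (1:ℝ))) +
          (volume {t : ℝ | ENNReal.ofReal (8*ε^2) ≤ If t} +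
            volume {t : ℝ | ENNReal.ofReal (2/5*ε^2) ≤ Ifh t}) := by
        calc _ ≤ _ := measure_union_le _ _
          _ ≤ _ := by gcongr <;> exact measure_union_le _ _
      _ ≤ (ENNReal.ofReal (ε^2) + ENNReal.ofReal (ε^2)) +
          (ENNReal.ofReal (ε/8) + ENNReal.ofReal (5/2*ε)) := by
        rw [hbd1, hbd2]; gcongr
      _ = ENNReal.ofReal (ε^2 + ε^2 + (ε/8 + 5/2*ε)) := by
        rw [← ENNReal.ofReal_add (by positivity) (by positivity),
          ← ENNReal.ofReal_add (by positivity) (by positivity),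
          ← ENNReal.ofReal_add (by positivity) (by positivity)]
      _ ≤ ENNReal.ofReal (5 * ε) := by
        apply ENNReal.ofReal_le_ofReal
        nlinarith
  · -- the good-lines property
    intro t ht z hz hzt
    obtain ⟨htI, ht1, htf, htfh⟩ := ht
    have hq0 : 0 ≤ gradSq u z := Finset.sum_nonneg fun i _ => sq_nonneg _
    refine le_trans (abs_sqrt_sub_one_le hq0) ?_
    by_contra hcon
    push_neg at hcon
    set s2 := ∑ i, z i * w i with hs2
    have hzΦ : z = Φ (t, s2) := by
      have h := hΦsurj z
      rwa [hzt] at h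
    have hts : t^2 + s2^2 < 1 := by
      rw [← hΦball (t, s2), ← hzΦ]
      exact hz
    set r := Real.sqrt (1 - t^2) with hr
    have ht2 : t^2 < 1 := by nlinarith [sq_nonneg s2]
    have hr2 : r^2 = 1 - t^2 := Real.sq_sqrt (by linarith)
    have hr0 : 0 < r := Real.sqrt_pos.mpr (by linarith)
    have hrs : ∀ s : ℝ, s ∈ Ioo (-r) r ↔ t^2 + s^2 < 1 := by
      intro s
      constructor
      · rintro ⟨h1, h2⟩
        nlinarith [sq_lt_sq' h1 h2]
      · intro h
        have hs2r : s^2 < r^2 := by linarith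
        exact abs_lt.mp (abs_lt_of_sq_lt_sq hs2r hr0.le)
    have hεr : ε ≤ r := by
      have ht' : t^2 ≤ (1-ε^2)^2 := sq_le_sq' (by linarith [abs_le.mp ht1]) (abs_le.mp ht1).2
      have h1 : ε^2 ≤ 1 - t^2 := by nlinarith
      exact Real.le_sqrt_of_sq_le (by linarith)
    have hballs : ∀ s : ℝ, s ∈ Ioo (-r) r → Φ (t, s) ∈ ball (0:E2) 1 := by
      intro s hs
      rw [hΦball (t, s)]
      exact (hrs s).mp hs
    set fφ : ℝ → ℝ := fun s => 1 - gradSq u (Φ (t, s)) with hfφ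
    set ρ : ℝ → ℝ := fun s => D2 u w (Φ (t, s)) with hρdef
    set M : ℝ → ℝ := fun s => fh (Φ (t, s)) with hM
    have hfeq : ∀ s, f (Φ (t, s)) = |fφ s| := fun s => rfl
    have hMeq : ∀ s, M s = |fφ s| * hessNorm u (Φ (t, s)) := fun s => rfl
    have hcon5 : 5*ε < |fφ s2| := by
      rw [hfφ]
      simp only []
      rw [← hzΦ]
      exact hcon
    -- line is inside the ball
    have hIccsub : ∀ {a b : ℝ}, a ∈ Ioo (-r) r → b ∈ Ioo (-r) r → Icc a b ⊆ Ioo (-r) r := by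
      rintro a b ⟨ha1, _⟩ ⟨_, hb2⟩ s ⟨h1, h2⟩
      exact ⟨by linarith, by linarith⟩
    have hφd : ∀ s ∈ Ioo (-r) r, HasDerivAt fφ (ρ s) s := by
      intro s hs
      have hb' : (t • v + s • w) ∈ ball (0:E2) 1 := hballs s hs
      exact hasDerivAt_line hu (t • v) w s hb'
    have hlinecont : Continuous (fun s : ℝ => Φ (t, s)) := by
      show Continuous (fun s : ℝ => t • v + s • w)
      exact continuous_const.add (continuous_id.smul continuous_const)
    have hmaps : ∀ {a b : ℝ}, a ∈ Ioo (-r) r → b ∈ Ioo (-r) r →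
        MapsTo (fun s => Φ (t, s)) (Icc a b) (closedBall (0:E2) 1) := by
      intro a b ha hb s hs
      exact ball_subset_closedBall (hballs s (hIccsub ha hb hs))
    have hρc : ∀ {a b : ℝ}, a ∈ Ioo (-r) r → b ∈ Ioo (-r) r →
        ContinuousOn ρ (Icc a b) := by
      intro a b ha hb
      exact (contOn_D2 hu w).comp hlinecont.continuousOn (hmaps ha hb)
    have hMc : ∀ {a b : ℝ}, a ∈ Ioo (-r) r → b ∈ Ioo (-r) r →
        ContinuousOn M (Icc a b) := by
      intro a b ha hb
      exact hfhc.comp hlinecont.continuousOn (hmaps ha hb)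
    have hM0 : ∀ s : ℝ, 0 ≤ M s := fun s =>
      mul_nonneg (abs_nonneg _) (Real.sqrt_nonneg _)
    have hbound : ∀ {a b : ℝ}, a ∈ Ioo (-r) r → b ∈ Ioo (-r) r →
        ∀ s ∈ Icc a b, 4*ε ≤ |fφ s| → |ρ s| ≤ (9/(4*ε)) * M s := by
      intro a b ha hb s hs h4
      have h1 : |ρ s| ≤ 2 * Real.sqrt (gradSq u (Φ (t, s))) * hessNorm u (Φ (t, s)) :=
        D2_bound u w _ hw2
      have hgle : gradSq u (Φ (t, s)) ≤ 1 + |fφ s| := by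
        have heq : gradSq u (Φ (t, s)) = 1 - fφ s := by rw [hfφ]; ring
        rw [heq]
        linarith [neg_abs_le (fφ s)]
      have h2 : Real.sqrt (gradSq u (Φ (t, s))) ≤ Real.sqrt (1 + |fφ s|) :=
        Real.sqrt_le_sqrt hgle
      have h3 : 2 * Real.sqrt (1 + |fφ s|) ≤ 9/(4*ε) * |fφ s| :=
        two_sqrt_bound hε0 hε1.le h4
      have hh0 : 0 ≤ hessNorm u (Φ (t, s)) := Real.sqrt_nonneg _
      calc |ρ s| ≤ 2 * Real.sqrt (gradSq u (Φ (t, s))) * hessNorm u (Φ (t, s)) := h1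
        _ ≤ (9/(4*ε) * |fφ s|) * hessNorm u (Φ (t, s)) := by nlinarith
        _ = 9/(4*ε) * M s := by rw [hMeq]; ring
    -- main dichotomy
    by_cases hcase : ∀ s ∈ Ioo (-r) r, 4*ε < f (Φ (t, s))
    · -- Case A : f > 4ε on the whole chord
      have hmono : ∀ s : ℝ,
          (Ioo (-r) r).indicator (fun _ => ENNReal.ofReal (4*ε)) s ≤ F (Φ (t, s)) := by
        intro s
        by_cases hs : s ∈ Ioo (-r) r
        · rw [indicator_of_mem hs]
          have hball' := hballs s hs
          rw [hF, indicator_of_mem hball']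
          exact ENNReal.ofReal_le_ofReal (hcase s hs).le
        · rw [indicator_of_notMem hs]; exact zero_le
      have hIflow : ENNReal.ofReal (4*ε) * volume (Ioo (-r) r) ≤ If t := by
        rw [hIf, ← lintegral_indicator_const measurableSet_Ioo]
        exact lintegral_mono hmono
      have hvol : volume (Ioo (-r) r) = ENNReal.ofReal (2*r) := by
        rw [Real.volume_Ioo]
        congr 1
        ring
      have hfin : ENNReal.ofReal (8*ε^2) ≤ If t := by
        refine le_trans ?_ hIflow
        rw [hvol, ← ENNReal.ofReal_mul (by positivity)]
        apply ENNReal.ofReal_le_ofReal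
        nlinarith [hεr]
      exact absurd htf (not_lt.mpr hfin)
    · -- Case B : crossing
      push_neg at hcase
      obtain ⟨s0, hs0I, hs0le⟩ := hcase
      have hs2I : s2 ∈ Ioo (-r) r := (hrs s2).mpr hts
      have hs0le' : |fφ s0| ≤ 4*ε := by rw [← hfeq]; exact hs0le
      have hC : (0:ℝ) < 9/(4*ε) := by positivity
      have hεC : ε / (9/(4*ε)) = 4*ε^2/9 := by field_simp
      -- get the crossing integral bound on some interval [A,B] ⊆ Ioo (-r) r
      have hfinal : ∀ A B : ℝ, A ≤ B → A ∈ Ioo (-r) r → B ∈ Ioo (-r) r →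
          4*ε^2/9 ≤ (∫ s in A..B, M s) → False := by
        intro A B hAB hA hB hint
        have hMintOn : IntegrableOn M (Ioc A B) :=
          ((hMc hA hB).integrableOn_compact isCompact_Icc).mono_set Ioc_subset_Icc_self
        have heq1 : ∫ s in A..B, M s = ∫ s in Ioc A B, M s :=
          intervalIntegral.integral_of_le hAB
        have heq2 : ENNReal.ofReal (∫ s in Ioc A B, M s)
            = ∫⁻ s in Ioc A B, ENNReal.ofReal (M s) :=
          ofReal_integral_eq_lintegral_ofReal hMintOn (ae_of_all _ fun s => hM0 s)
        have hle : (∫⁻ s in Ioc A B, ENNReal.ofReal (M s)) ≤ Ifh t := by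
          rw [← lintegral_indicator measurableSet_Ioc]
          apply lintegral_mono
          intro s
          by_cases hs : s ∈ Ioc A B
          · rw [indicator_of_mem hs]
            show ENNReal.ofReal (M s) ≤ Fh (Φ (t, s))
            have hsIoo : s ∈ Ioo (-r) r := hIccsub hA hB (Ioc_subset_Icc_self hs)
            have hball' := hballs s hsIoo
            have heqFh : Fh (Φ (t, s)) = ENNReal.ofReal (fh (Φ (t, s))) :=
              Set.indicator_of_mem hball' _
            rw [heqFh]
          · rw [indicator_of_notMem hs]; exact zero_le
        have hcontra : ENNReal.ofReal (2/5*ε^2) ≤ Ifh t := by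
          calc ENNReal.ofReal (2/5*ε^2) ≤ ENNReal.ofReal (4*ε^2/9) :=
              ENNReal.ofReal_le_ofReal (by nlinarith)
            _ ≤ ENNReal.ofReal (∫ s in A..B, M s) := ENNReal.ofReal_le_ofReal hint
            _ = ENNReal.ofReal (∫ s in Ioc A B, M s) := by rw [heq1]
            _ = ∫⁻ s in Ioc A B, ENNReal.ofReal (M s) := heq2
            _ ≤ Ifh t := hle
        exact absurd htfh (not_lt.mpr hcontra)
      rcases lt_trichotomy s0 s2 with hlt | heqc | hgt
      · -- s0 < s2 : direct crossing
        have hcr := crossing hC hlt.le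
          (fun s hs => hφd s (hIccsub hs0I hs2I hs))
          (hρc hs0I hs2I) (hMc hs0I hs2I) (fun s _ => hM0 s)
          (fun s hs h4 => hbound hs0I hs2I s hs h4) hs0le' hcon5.le
        rw [hεC] at hcr
        exact hfinal s0 s2 hlt.le hs0I hs2I hcr
      · -- impossible
        rw [heqc] at hs0le'
        linarith
      · -- s2 < s0 : reflected crossing
        set c := s2 + s0 with hc
        have hrefmem : ∀ s ∈ Icc s2 s0, c - s ∈ Icc s2 s0 := by
          rintro s ⟨h1, h2⟩
          exact ⟨by simp [hc]; linarith, by simp [hc]; linarith⟩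
        have hcr := crossing (ε := ε) hC hgt.le
          (φ := fun s => fφ (c - s)) (ρ := fun s => -ρ (c - s)) (M := fun s => M (c - s))
          (fun s hs => by
            have hg : HasDerivAt (fun s : ℝ => c - s) (-1) s := by
              simpa using (hasDerivAt_const s c).fun_sub (hasDerivAt_id s)
            have h := (hφd (c - s) (hIccsub hs2I hs0I (hrefmem s hs))).comp s hg
            simpa [Function.comp_def] using h)
          (by
            have hcs : Continuous (fun s : ℝ => c - s) := continuous_const.sub continuous_id
            exact ((hρc hs2I hs0I).comp hcs.continuousOn
              (fun s hs => hrefmem s hs)).neg)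
          (by
            have hcs : Continuous (fun s : ℝ => c - s) := continuous_const.sub continuous_id
            exact (hMc hs2I hs0I).comp hcs.continuousOn (fun s hs => hrefmem s hs))
          (fun s _ => hM0 _)
          (fun s hs h4 => by
            rw [abs_neg]
            exact hbound hs2I hs0I (c - s) (hrefmem s hs) h4)
          (by
            show |fφ (c - s2)| ≤ 4*ε
            have hcc : c - s2 = s0 := by rw [hc]; ring
            rw [hcc]; exact hs0le')
          (by
            show 5*ε ≤ |fφ (c - s0)|
            have hcc : c - s0 = s2 := by rw [hc]; ring
            rw [hcc]; exact hcon5.le)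
        rw [hεC] at hcr
        have href : (∫ s in s2..s0, M (c - s)) = ∫ s in s2..s0, M s := by
          rw [intervalIntegral.integral_comp_sub_left M c]
          have h1 : c - s0 = s2 := by rw [hc]; ring
          have h2 : c - s2 = s0 := by rw [hc]; ring
          rw [h1, h2]
        rw [href] at hcr
        exact hfinal s2 s0 hgt.le hs2I hs0I hcr
end
end

section
/- Let γ : [0, L] → ℝ² be a C¹ curve parametrized by arclength (|γ′(s)| = 1 for all s), with endpoints a = γ(0), b = γ(L), a ≠ b, and set e = (b − a)/|b − a| and Δ = L − |b − a| ≥ 0. Then: (i) ∫₀^L |γ′(s) − e|² ds = 2Δ; and (ii) every point of the curve lies within distance 2√(LΔ) + Δ of the line segment [a, b]. -/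
open MeasureTheory Metric Set Filter
open scoped Real Topology BigOperators

noncomputable section

/-- Let `γ : [0,L] → ℝ²` be a `C¹` curve parametrized by arclength
with endpoints `a = γ(0) ≠ b = γ(L)`, `e = (b−a)/|b−a|` and `Δ = L − |b−a|`. Then
`Δ ≥ 0`, `∫₀^L |γ'(s) − e|² ds = 2Δ`, and every point of the curve lies within
distance `2√(LΔ) + Δ` of the segment `[a,b]`. -/
theorem arclength_curve_close_to_segment
    (L : ℝ) (hL : 0 ≤ L) (γ γ' : ℝ → E2)
    (hderiv : ∀ s ∈ Set.Icc (0 : ℝ) L, HasDerivAt γ (γ' s) s)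
    (hcont : ContinuousOn γ' (Set.Icc (0 : ℝ) L))
    (hunit : ∀ s ∈ Set.Icc (0 : ℝ) L, ‖γ' s‖ = 1)
    (hne : γ 0 ≠ γ L) :
    0 ≤ L - ‖γ L - γ 0‖ ∧
    (∫ s in (0 : ℝ)..L, ‖γ' s - ‖γ L - γ 0‖⁻¹ • (γ L - γ 0)‖ ^ 2)
      = 2 * (L - ‖γ L - γ 0‖) ∧
    ∀ s ∈ Set.Icc (0 : ℝ) L,
      Metric.infDist (γ s) (segment ℝ (γ 0) (γ L))
        ≤ 2 * Real.sqrt (L * (L - ‖γ L - γ 0‖)) + (L - ‖γ L - γ 0‖) := by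
  have huIcc : Set.uIcc (0:ℝ) L = Set.Icc 0 L := Set.uIcc_of_le hL
  set v : E2 := γ L - γ 0 with hv
  set d : ℝ := ‖v‖ with hdd
  have hd : 0 < d := norm_pos_iff.2 (sub_ne_zero.2 (Ne.symm hne))
  set e : E2 := d⁻¹ • v with hee
  have hen : ‖e‖ = 1 := by
    rw [hee, norm_smul, norm_inv, Real.norm_eq_abs, abs_of_pos hd, ← hdd,
      inv_mul_cancel₀ hd.ne']
  have hIγ' : IntervalIntegrable γ' volume 0 L := by
    apply ContinuousOn.intervalIntegrable; rwa [huIcc]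
  -- FTC on subintervals
  have hFTC : ∀ s ∈ Set.Icc (0:ℝ) L, (∫ r in (0:ℝ)..s, γ' r) = γ s - γ 0 := by
    intro s hs
    apply intervalIntegral.integral_eq_sub_of_hasDerivAt
    · intro t ht
      rw [Set.uIcc_of_le hs.1] at ht
      exact hderiv t ⟨ht.1, ht.2.trans hs.2⟩
    · apply ContinuousOn.intervalIntegrable
      rw [Set.uIcc_of_le hs.1]
      exact hcont.mono (Set.Icc_subset_Icc le_rfl hs.2)
  have hbv : (∫ r in (0:ℝ)..L, γ' r) = v := hFTC L ⟨hL, le_rfl⟩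
  have hdL : d ≤ L := by
    calc d = ‖∫ r in (0:ℝ)..L, γ' r‖ := by rw [hbv]
    _ ≤ ∫ r in (0:ℝ)..L, ‖γ' r‖ := intervalIntegral.norm_integral_le_integral_norm hL
    _ = ∫ r in (0:ℝ)..L, (1:ℝ) := by
        apply intervalIntegral.integral_congr
        intro t ht; rw [huIcc] at ht; exact hunit t ht
    _ = L := by simp
  have hΔ : 0 ≤ L - d := by linarith
  have hL' : 0 < L := lt_of_lt_of_le hd hdL
  -- Part (ii)
  have key2 : (∫ s in (0:ℝ)..L, ‖γ' s - e‖ ^ 2) = 2 * (L - d) := by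
    have hinner : (∫ s in (0:ℝ)..L, (inner ℝ e (γ' s) : ℝ)) = d := by
      have h := (innerSL ℝ e).intervalIntegral_comp_comm hIγ'
      simp only [innerSL_apply_apply] at h
      rw [h, hbv, hee, real_inner_smul_left, real_inner_self_eq_norm_sq, ← hdd]
      field_simp
    have hIinner : IntervalIntegrable (fun s => 2 * (inner ℝ e (γ' s) : ℝ)) volume 0 L := by
      apply ContinuousOn.intervalIntegrable
      rw [huIcc]
      exact continuousOn_const.mul (continuousOn_const.inner hcont)
    have h1 : Set.EqOn (fun s => ‖γ' s - e‖ ^ 2) (fun s => 2 - 2 * (inner ℝ e (γ' s) : ℝ))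
        (Set.uIcc (0:ℝ) L) := by
      intro s hs
      rw [huIcc] at hs
      have hu := hunit s hs
      simp only
      rw [norm_sub_sq_real, hu, hen, real_inner_comm]
      ring
    rw [intervalIntegral.integral_congr h1,
      intervalIntegral.integral_sub intervalIntegrable_const hIinner,
      intervalIntegral.integral_const_mul, hinner]
    simp
    ring
  refine ⟨hΔ, key2, ?_⟩
  -- Part (iii)
  have hvseg : γ 0 + d • e = γ L := by
    rw [hee, smul_smul, mul_inv_cancel₀ hd.ne', one_smul, hv]
    abel
  intro s hs
  have hcs : ContinuousOn (fun r => γ' r - e) (Set.Icc (0:ℝ) s) :=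
    (hcont.mono (Set.Icc_subset_Icc le_rfl hs.2)).sub continuousOn_const
  -- the straight point at parameter s
  have hFTC2 : γ s - (γ 0 + s • e) = ∫ r in (0:ℝ)..s, (γ' r - e) := by
    rw [intervalIntegral.integral_sub
        ((hcont.mono (Set.Icc_subset_Icc le_rfl hs.2)).intervalIntegrable_of_Icc hs.1)
        intervalIntegrable_const,
      hFTC s hs, intervalIntegral.integral_const]
    rw [sub_zero]
    abel
  -- squared integral bound
  have hInt2L : IntervalIntegrable (fun r => ‖γ' r - e‖ ^ 2) volume 0 L := by
    apply ContinuousOn.intervalIntegrable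
    rw [huIcc]
    exact ((hcont.sub continuousOn_const).norm.pow 2)
  have hsq : (∫ r in (0:ℝ)..s, ‖γ' r - e‖ ^ 2) ≤ 2 * (L - d) := by
    rw [← key2]
    apply intervalIntegral.integral_mono_interval le_rfl hs.1 hs.2
    · filter_upwards with x using by positivity
    · exact hInt2L
  have hsq0 : (0:ℝ) ≤ ∫ r in (0:ℝ)..s, ‖γ' r - e‖ ^ 2 := by
    apply intervalIntegral.integral_nonneg hs.1
    intro x _; positivity
  -- pointwise AM–GM gives a bound for every lambda
  have hB : ∀ lam : ℝ, 0 < lam →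
      (∫ r in (0:ℝ)..s, ‖γ' r - e‖) ≤ lam * L / 2 + (L - d) / lam := by
    intro lam hlam
    have hI1 : IntervalIntegrable (fun r => ‖γ' r - e‖) volume 0 s := by
      apply ContinuousOn.intervalIntegrable
      rw [Set.uIcc_of_le hs.1]
      exact hcs.norm
    have hI2 : IntervalIntegrable (fun r => lam / 2 + ‖γ' r - e‖ ^ 2 / (2 * lam))
        volume 0 s := by
      apply ContinuousOn.intervalIntegrable
      rw [Set.uIcc_of_le hs.1]
      exact continuousOn_const.add ((hcs.norm.pow 2).div_const _)
    calc (∫ r in (0:ℝ)..s, ‖γ' r - e‖)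
        ≤ ∫ r in (0:ℝ)..s, (lam / 2 + ‖γ' r - e‖ ^ 2 / (2 * lam)) := by
          apply intervalIntegral.integral_mono_on hs.1 hI1 hI2
          intro x _
          have h0 : (0:ℝ) ≤ (‖γ' x - e‖ - lam) ^ 2 := sq_nonneg _
          have h1 : (0:ℝ) ≤ ‖γ' x - e‖ := norm_nonneg _
          rw [div_add_div _ _ two_ne_zero (by positivity : (2:ℝ) * lam ≠ 0),
            le_div_iff₀ (by positivity)]
          nlinarith
      _ = lam / 2 * s + (∫ r in (0:ℝ)..s, ‖γ' r - e‖ ^ 2) / (2 * lam) := by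
          rw [intervalIntegral.integral_add (intervalIntegrable_const)
            (((by
              apply ContinuousOn.intervalIntegrable
              rw [Set.uIcc_of_le hs.1]
              exact hcs.norm.pow 2 : IntervalIntegrable (fun r => ‖γ' r - e‖ ^ 2)
                volume 0 s)).div_const _),
            intervalIntegral.integral_const, intervalIntegral.integral_div]
          simp [smul_eq_mul]
          ring
      _ ≤ lam * L / 2 + (L - d) / lam := by
          have h1 : lam / 2 * s ≤ lam * L / 2 := by
            have := hs.2
            nlinarith
          have h2 : (∫ r in (0:ℝ)..s, ‖γ' r - e‖ ^ 2) / (2 * lam) ≤ (L - d) / lam := by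
            rw [div_le_div_iff₀ (by positivity) hlam]
            nlinarith
          linarith
  -- distance from γ s to the straight point
  have hA : ∀ lam : ℝ, 0 < lam →
      ‖γ s - (γ 0 + s • e)‖ ≤ lam * L / 2 + (L - d) / lam := by
    intro lam hlam
    calc ‖γ s - (γ 0 + s • e)‖ = ‖∫ r in (0:ℝ)..s, (γ' r - e)‖ := by rw [hFTC2]
      _ ≤ ∫ r in (0:ℝ)..s, ‖γ' r - e‖ :=
          intervalIntegral.norm_integral_le_integral_norm hs.1
      _ ≤ lam * L / 2 + (L - d) / lam := hB lam hlam
  -- point on the segment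
  set c : ℝ := min s d with hc
  have hc0 : 0 ≤ c := le_min hs.1 hd.le
  have hcd : c ≤ d := min_le_right _ _
  have hmem : γ 0 + c • e ∈ segment ℝ (γ 0) (γ L) := by
    rw [segment_eq_image']
    refine ⟨c / d, ⟨by positivity, by rw [div_le_one hd]; exact hcd⟩, ?_⟩
    have h3 : γ L - γ 0 = d • e := by rw [← hvseg]; abel
    show γ 0 + (c / d) • (γ L - γ 0) = γ 0 + c • e
    rw [h3, smul_smul, div_mul_cancel₀ _ hd.ne']
  have hnear : dist (γ 0 + s • e) (γ 0 + c • e) ≤ L - d := by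
    rw [dist_eq_norm]
    have : γ 0 + s • e - (γ 0 + c • e) = (s - c) • e := by
      rw [sub_smul]; abel
    rw [this, norm_smul, hen, mul_one, Real.norm_eq_abs,
      abs_of_nonneg (sub_nonneg.2 (min_le_left s d))]
    have h2 := hs.2
    rcases le_total s d with h | h
    · rw [min_eq_left h]; linarith
    · rw [min_eq_right h]; linarith
  have hkey : ∀ lam : ℝ, 0 < lam →
      Metric.infDist (γ s) (segment ℝ (γ 0) (γ L))
        ≤ lam * L / 2 + (L - d) / lam + (L - d) := by
    intro lam hlam
    calc Metric.infDist (γ s) (segment ℝ (γ 0) (γ L))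
        ≤ dist (γ s) (γ 0 + c • e) := Metric.infDist_le_dist_of_mem hmem
      _ ≤ dist (γ s) (γ 0 + s • e) + dist (γ 0 + s • e) (γ 0 + c • e) :=
          dist_triangle _ _ _
      _ ≤ lam * L / 2 + (L - d) / lam + (L - d) := by
          rw [dist_eq_norm]
          have := hA lam hlam
          linarith [hnear]
  -- choose lambda
  rcases eq_or_lt_of_le hΔ with hΔ0 | hΔ0
  · -- Δ = 0
    rw [← hΔ0]
    simp only [mul_zero, Real.sqrt_zero, add_zero]
    refine le_of_forall_pos_le_add ?_
    intro ε hε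
    have := hkey (2 * ε / L) (by positivity)
    rw [← hΔ0] at this
    calc Metric.infDist (γ s) (segment ℝ (γ 0) (γ L))
        ≤ 2 * ε / L * L / 2 + 0 / (2 * ε / L) + 0 := this
      _ = 0 + ε := by field_simp; ring
  · -- Δ > 0
    set sL := Real.sqrt L with hsL
    set sD := Real.sqrt (L - d) with hsD
    have hsL0 : 0 < sL := Real.sqrt_pos.2 hL'
    have hsD0 : 0 < sD := Real.sqrt_pos.2 hΔ0
    have hsL2 : sL ^ 2 = L := Real.sq_sqrt hL
    have hsD2 : sD ^ 2 = L - d := Real.sq_sqrt hΔ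
    have hprod : Real.sqrt (L * (L - d)) = sL * sD := Real.sqrt_mul hL _
    have := hkey (sD / sL) (by positivity)
    rw [hprod]
    refine this.trans ?_
    have h1 : sD / sL * L / 2 = sD * sL / 2 := by
      rw [← hsL2]; field_simp
    have h2 : (L - d) / (sD / sL) = sD * sL := by
      rw [← hsD2]; field_simp
    rw [h1, h2, mul_comm sL sD]
    linarith [mul_pos hsD0 hsL0]
end
end
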